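/- Let E be a real normed vector space, N ∈ ℕ with N ≥ 4, and let L_d : E × E × E → ℝ be continuously (Fréchet) differentiable, with partial differentials D₁L_d, D₂L_d, D₃L_d with respect to its three arguments. Define the discrete action S_d : E^{N+1} → ℝ by S_d(g₀, …, g_N) = ∑_{k=1}^{N−1} L_d(g_{k−1}, g_k, g_{k+1}). Then a tuple (g₀, …, g_N) is a critical point of S_d with respect to variations fixing g₀, g₁, g_{N−1}, g_N — i.e., for every (δ₀, …, δ_N) ∈ E^{N+1} with δ₀ = δ₁ = δ_{N−1} = δ_N = 0, the derivative of ε ↦ S_d(g₀ + εδ₀, …, g_N + εδ_N) at ε = 0 vanishes — if and only if for every k with 2 ≤ k ≤ N−2 the discrete second-order Euler–Lagrange equations hold: D₂L_d(g_{k−1}, g_k, g_{k+1}) + D₃L_d(g_{k−2}, g_{k−1}, g_k) + D₁L_d(g_k, g_{k+1}, g_{k+2}) = 0 (as elements of the dual space E*). -/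

import Mathlib

/-- Characterization of critical points of the discrete action of a
second-order discrete Lagrangian by the discrete second-order Euler–Lagrange
equations (equation DEL2), in the linear-space setting where variations are
straight-line perturbations fixing the two initial and the two final points. -/
theorem discrete_second_order_euler_lagrange
    {E : Type*} [NormedAddCommGroup E] [NormedSpace ℝ E]
    (N : ℕ) (hN : 4 ≤ N)
    (Ld : E × E × E → ℝ) (hLd : ContDiff ℝ 1 Ld)
    (g : ℕ → E) :
    (∀ δ : ℕ → E, δ 0 = 0 → δ 1 = 0 → δ (N - 1) = 0 → δ N = 0 →
        deriv (fun ε : ℝ =>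
          ∑ k ∈ Finset.Icc 1 (N - 1),
            Ld (g (k - 1) + ε • δ (k - 1), g k + ε • δ k,
                g (k + 1) + ε • δ (k + 1))) 0 = 0)
      ↔
    (∀ k : ℕ, 2 ≤ k → k ≤ N - 2 →
        fderiv ℝ (fun y : E => Ld (g (k - 1), y, g (k + 1))) (g k)
          + fderiv ℝ (fun y : E => Ld (g (k - 2), g (k - 1), y)) (g k)
          + fderiv ℝ (fun y : E => Ld (y, g (k + 1), g (k + 2))) (g k)
          = 0) := by
  have hD : Differentiable ℝ Ld := hLd.differentiable one_ne_zero
  -- splitting of the total differential into the three partial differentials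
  have hsplit : ∀ a b c u v w : E,
      fderiv ℝ Ld (a,b,c) (u,v,w)
        = fderiv ℝ (fun x => Ld (x,b,c)) a u
          + fderiv ℝ (fun y => Ld (a,y,c)) b v
          + fderiv ℝ (fun z => Ld (a,b,z)) c w := by
    intro a b c u v w
    have h1 : HasFDerivAt (fun x : E => Ld (x,b,c))
        ((fderiv ℝ Ld (a,b,c)).comp ((ContinuousLinearMap.id ℝ E).prod 0)) a :=
      (hD (a,b,c)).hasFDerivAt.comp a (HasFDerivAt.prodMk (hasFDerivAt_id a) (hasFDerivAt_const (b,c) a))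
    have h2 : HasFDerivAt (fun y : E => Ld (a,y,c))
        ((fderiv ℝ Ld (a,b,c)).comp
          ((0 : E →L[ℝ] E).prod ((ContinuousLinearMap.id ℝ E).prod 0))) b :=
      (hD (a,b,c)).hasFDerivAt.comp b (HasFDerivAt.prodMk (hasFDerivAt_const a b)
        (HasFDerivAt.prodMk (hasFDerivAt_id b) (hasFDerivAt_const c b)))
    have h3 : HasFDerivAt (fun z : E => Ld (a,b,z))
        ((fderiv ℝ Ld (a,b,c)).comp
          ((0 : E →L[ℝ] E).prod ((0 : E →L[ℝ] E).prod (ContinuousLinearMap.id ℝ E)))) c :=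
      (hD (a,b,c)).hasFDerivAt.comp c (HasFDerivAt.prodMk (hasFDerivAt_const a c)
        (HasFDerivAt.prodMk (hasFDerivAt_const b c) (hasFDerivAt_id c)))
    rw [h1.fderiv, h2.fderiv, h3.fderiv]
    simp only [ContinuousLinearMap.comp_apply, ContinuousLinearMap.prod_apply,
      ContinuousLinearMap.id_apply, ContinuousLinearMap.zero_apply]
    rw [← map_add, ← map_add]
    congr 1
    simp [Prod.ext_iff]
  -- derivative of a single straight-line perturbation
  have hterm : ∀ a b c u v w : E,
      HasDerivAt (fun ε : ℝ => Ld (a + ε•u, b + ε•v, c + ε•w))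
        (fderiv ℝ Ld (a,b,c) (u,v,w)) 0 := by
    intro a b c u v w
    have ha : HasDerivAt (fun ε : ℝ => a + ε•u) u 0 := by
      simpa using ((hasDerivAt_id (0:ℝ)).smul_const u).const_add a
    have hb : HasDerivAt (fun ε : ℝ => b + ε•v) v 0 := by
      simpa using ((hasDerivAt_id (0:ℝ)).smul_const v).const_add b
    have hc' : HasDerivAt (fun ε : ℝ => c + ε•w) w 0 := by
      simpa using ((hasDerivAt_id (0:ℝ)).smul_const w).const_add c
    have hcurve : HasDerivAt
        (fun ε : ℝ => ((a + ε•u, b + ε•v, c + ε•w) : E × E × E))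
        ((u,v,w) : E × E × E) 0 := HasDerivAt.prodMk ha (HasDerivAt.prodMk hb hc')
    have hf : HasFDerivAt Ld (fderiv ℝ Ld (a,b,c))
        ((fun ε : ℝ => ((a + ε•u, b + ε•v, c + ε•w) : E × E × E)) 0) := by
      simpa using (hD (a,b,c)).hasFDerivAt
    exact hf.comp_hasDerivAt 0 hcurve
  -- the key computation of the first variation
  have key : ∀ δ : ℕ → E, δ 0 = 0 → δ 1 = 0 → δ (N - 1) = 0 → δ N = 0 →
      deriv (fun ε : ℝ =>
        ∑ k ∈ Finset.Icc 1 (N - 1),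
          Ld (g (k - 1) + ε • δ (k - 1), g k + ε • δ k,
              g (k + 1) + ε • δ (k + 1))) 0
      = ∑ k ∈ Finset.Icc 2 (N - 2),
          (fderiv ℝ (fun y : E => Ld (g (k - 1), y, g (k + 1))) (g k) (δ k)
           + fderiv ℝ (fun y : E => Ld (g (k - 2), g (k - 1), y)) (g k) (δ k)
           + fderiv ℝ (fun y : E => Ld (y, g (k + 1), g (k + 2))) (g k) (δ k)) := by
    intro δ h0 h1 hN1 hNN
    have hsum : HasDerivAt (fun ε : ℝ =>
        ∑ k ∈ Finset.Icc 1 (N - 1),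
          Ld (g (k - 1) + ε • δ (k - 1), g k + ε • δ k,
              g (k + 1) + ε • δ (k + 1)))
        (∑ k ∈ Finset.Icc 1 (N - 1),
          fderiv ℝ Ld (g (k - 1), g k, g (k + 1)) (δ (k - 1), δ k, δ (k + 1))) 0 :=
      HasDerivAt.fun_sum (fun k _ => hterm _ _ _ _ _ _)
    rw [hsum.deriv]
    rw [Finset.sum_congr rfl (fun k _ => hsplit (g (k-1)) (g k) (g (k+1))
      (δ (k-1)) (δ k) (δ (k+1)))]
    rw [Finset.sum_add_distrib, Finset.sum_add_distrib]
    -- reindex the first partial sum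
    have eq1 : ∑ k ∈ Finset.Icc 1 (N - 1),
        fderiv ℝ (fun x => Ld (x, g k, g (k+1))) (g (k-1)) (δ (k-1))
        = ∑ k ∈ Finset.Icc 2 (N - 2),
        fderiv ℝ (fun y : E => Ld (y, g (k + 1), g (k + 2))) (g k) (δ k) := by
      have e1 : Finset.Icc 1 (N-1) = Finset.map (addLeftEmbedding 1) (Finset.Icc 0 (N-2)) := by
        rw [Finset.map_add_left_Icc]; congr 1; omega
      rw [e1, Finset.sum_map]
      have step : ∀ j, fderiv ℝ (fun x => Ld (x, g (addLeftEmbedding 1 j),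
            g (addLeftEmbedding 1 j + 1))) (g (addLeftEmbedding 1 j - 1))
            (δ (addLeftEmbedding 1 j - 1))
          = fderiv ℝ (fun y : E => Ld (y, g (j + 1), g (j + 2))) (g j) (δ j) := by
        intro j
        simp only [addLeftEmbedding_apply]
        have i3 : 1 + j + 1 = j + 2 := by omega
        have i1 : 1 + j - 1 = j := by omega
        have i2 : 1 + j = j + 1 := by omega
        rw [i3, i1, i2]
      rw [Finset.sum_congr rfl (fun j _ => step j)]
      refine (Finset.sum_subset (Finset.Icc_subset_Icc (by omega) le_rfl) ?_).symm
      intro x hx hx'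
      simp only [Finset.mem_Icc] at hx hx'
      have : x = 0 ∨ x = 1 := by omega
      rcases this with h | h <;> subst h
      · rw [h0]; simp
      · rw [h1]; simp
    -- restrict the second partial sum
    have eq2 : ∑ k ∈ Finset.Icc 1 (N - 1),
        fderiv ℝ (fun y => Ld (g (k-1), y, g (k+1))) (g k) (δ k)
        = ∑ k ∈ Finset.Icc 2 (N - 2),
        fderiv ℝ (fun y : E => Ld (g (k - 1), y, g (k + 1))) (g k) (δ k) := by
      refine (Finset.sum_subset (Finset.Icc_subset_Icc (by omega) (by omega)) ?_).symm
      intro x hx hx'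
      simp only [Finset.mem_Icc] at hx hx'
      have : x = 1 ∨ x = N - 1 := by omega
      rcases this with h | h <;> subst h
      · rw [h1]; simp
      · rw [hN1]; simp
    -- reindex the third partial sum
    have eq3 : ∑ k ∈ Finset.Icc 1 (N - 1),
        fderiv ℝ (fun z => Ld (g (k-1), g k, z)) (g (k+1)) (δ (k+1))
        = ∑ k ∈ Finset.Icc 2 (N - 2),
        fderiv ℝ (fun y : E => Ld (g (k - 2), g (k - 1), y)) (g k) (δ k) := by
      have e2 : Finset.Icc 2 N = Finset.map (addLeftEmbedding 1) (Finset.Icc 1 (N-1)) := by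
        rw [Finset.map_add_left_Icc]; congr 1; omega
      have half : ∑ k ∈ Finset.Icc 2 N,
          fderiv ℝ (fun y : E => Ld (g (k - 2), g (k - 1), y)) (g k) (δ k)
          = ∑ k ∈ Finset.Icc 1 (N - 1),
          fderiv ℝ (fun z => Ld (g (k-1), g k, z)) (g (k+1)) (δ (k+1)) := by
        rw [e2, Finset.sum_map]
        refine Finset.sum_congr rfl fun j hj => ?_
        simp only [addLeftEmbedding_apply]
        have i1 : 1 + j - 2 = j - 1 := by omega
        have i2 : 1 + j - 1 = j := by omega
        have i3 : 1 + j = j + 1 := by omega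
        rw [i1, i2, i3]
      rw [← half]
      refine (Finset.sum_subset (Finset.Icc_subset_Icc le_rfl (by omega)) ?_).symm
      intro x hx hx'
      simp only [Finset.mem_Icc] at hx hx'
      have : x = N - 1 ∨ x = N := by omega
      rcases this with h | h <;> subst h
      · rw [hN1]; simp
      · rw [hNN]; simp
    rw [eq1, eq2, eq3, Finset.sum_add_distrib, Finset.sum_add_distrib]
    ring
  constructor
  · intro h k hk2 hkN2
    ext v
    set δ : ℕ → E := fun j => if j = k then v else 0 with hδ
    have d0 : δ 0 = 0 := if_neg (by omega)
    have d1 : δ 1 = 0 := if_neg (by omega)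
    have dN1 : δ (N - 1) = 0 := if_neg (by omega)
    have dNN : δ N = 0 := if_neg (by omega)
    have hcrit := h δ d0 d1 dN1 dNN
    rw [key δ d0 d1 dN1 dNN] at hcrit
    rw [Finset.sum_eq_single k (fun b _ hb => by
        have : δ b = 0 := if_neg hb
        rw [this]; simp)
      (fun hk => absurd (Finset.mem_Icc.mpr ⟨hk2, hkN2⟩) hk)] at hcrit
    have dk : δ k = v := if_pos rfl
    rw [dk] at hcrit
    simpa [ContinuousLinearMap.add_apply] using hcrit
  · intro h δ h0 h1 hN1 hNN
    rw [key δ h0 h1 hN1 hNN]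
    refine Finset.sum_eq_zero fun k hk => ?_
    obtain ⟨hk2, hkN⟩ := Finset.mem_Icc.mp hk
    have h2 := ContinuousLinearMap.ext_iff.mp (h k hk2 hkN) (δ k)
    simpa [ContinuousLinearMap.add_apply] using h2
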